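/- If 2^μ ≤ λ for infinite cardinals μ, λ, then the Tychonoff product of any family of initially λ-compact spaces is initially μ-compact. -/

import Mathlib

open Cardinal Set

universe u v

/-- `x` is a `D`-limit point of the family of sets `O`. -/
def DLimitSets {X : Type u} {I : Type v} [TopologicalSpace X]
    (D : Ultrafilter I) (O : I → Set X) (x : X) : Prop :=
  ∀ U ∈ nhds x, {i | (U ∩ O i).Nonempty} ∈ D

/-- `X` is `D`-pseudocompact. -/
def DPseudocompact (X : Type u) {I : Type v} [TopologicalSpace X]
    (D : Ultrafilter I) : Prop :=
  ∀ O : I → Set X, (∀ i, IsOpen (O i)) → (∀ i, (O i).Nonempty) →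
    ∃ x : X, DLimitSets D O x

/-- Every open cover of cardinality at most `lam` has a finite subfamily with dense union. -/
def WeaklyInitiallyCompact (X : Type u) [TopologicalSpace X] (lam : Cardinal.{u}) : Prop :=
  ∀ 𝒰 : Set (Set X), (∀ U ∈ 𝒰, IsOpen U) → ⋃₀ 𝒰 = Set.univ →
    Cardinal.mk 𝒰 ≤ lam →
    ∃ t : Finset (Set X), ↑t ⊆ 𝒰 ∧ Dense (⋃₀ (t : Set (Set X)))

/-- A regular ultrafilter over `I` (regular of degree `|I|`): there is an `I`-indexed
family of members of `D` every infinite subfamily of which has empty intersection. -/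
def RegularUltrafilter {I : Type v} (D : Ultrafilter I) : Prop :=
  ∃ Z : I → Set I, (∀ i, Z i ∈ D) ∧
    ∀ S : Set I, S.Infinite → ⋂ i ∈ S, Z i = ∅

/-- Every open cover of cardinality at most `lam` has a finite subcover. -/
def InitiallyCompact (X : Type u) [TopologicalSpace X] (lam : Cardinal.{u}) : Prop :=
  ∀ 𝒰 : Set (Set X), (∀ U ∈ 𝒰, IsOpen U) → ⋃₀ 𝒰 = Set.univ →
    Cardinal.mk 𝒰 ≤ lam →
    ∃ t : Finset (Set X), ↑t ⊆ 𝒰 ∧ ⋃₀ (t : Set (Set X)) = Set.univ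

lemma aux_fip {X : Type u} [TopologicalSpace X] {lam : Cardinal.{u}}
    (h : InitiallyCompact X lam) {ι : Type u} (C : ι → Set X)
    (hcl : ∀ i, IsClosed (C i)) (hcard : Cardinal.mk ι ≤ lam)
    (hfip : ∀ s : Finset ι, (⋂ i ∈ s, C i).Nonempty) : (⋂ i, C i).Nonempty := by
  classical
  by_contra hne
  rw [Set.not_nonempty_iff_eq_empty] at hne
  have hcover : ⋃₀ (Set.range fun i => (C i)ᶜ) = Set.univ := by
    rw [Set.sUnion_range, ← Set.compl_iInter, hne, Set.compl_empty]

  obtain ⟨t, hts, htu⟩ := h _ (by rintro U ⟨i, rfl⟩; exact (hcl i).isOpen_compl) hcover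
    (le_trans mk_range_le hcard)
  have hch : ∀ U ∈ t, ∃ i, (C i)ᶜ = U := fun U hU => hts hU
  choose g hg using hch
  set s : Finset ι := t.attach.image (fun U => g U.1 U.2) with hs
  obtain ⟨x, hx⟩ := hfip s
  have hxu : x ∈ ⋃₀ (t : Set (Set X)) := htu ▸ mem_univ x
  obtain ⟨U, hU, hxU⟩ := hxu
  have hmem : g U hU ∈ s := Finset.mem_image.2 ⟨⟨U, hU⟩, Finset.mem_attach _ _, rfl⟩
  have hxC : x ∈ C (g U hU) := Set.mem_iInter₂.1 hx _ hmem
  rw [← hg U hU] at hxU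
  exact hxU hxC

lemma aux_dcompact {X : Type u} [TopologicalSpace X] {mu lam : Cardinal.{u}} {I : Type u}
    (hX : InitiallyCompact X lam) (D : Ultrafilter I) (hI : Cardinal.mk I ≤ mu)
    (h2 : 2 ^ mu ≤ lam) (f : I → X) : ∃ x : X, Filter.Tendsto f ↑D (nhds x) := by
  have hcard : Cardinal.mk (D : Filter I).sets ≤ lam := by
    calc Cardinal.mk (D : Filter I).sets ≤ Cardinal.mk (Set I) := mk_set_le _
    _ = 2 ^ Cardinal.mk I := mk_set
    _ ≤ 2 ^ mu := power_le_power_left two_ne_zero hI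
    _ ≤ lam := h2
  have hfip : ∀ s : Finset (D : Filter I).sets,
      (⋂ A ∈ s, closure (f '' (A : Set I))).Nonempty := by
    intro s
    have hB : (⋂ A ∈ s, (A : Set I)) ∈ (D : Filter I) :=
      (Filter.biInter_finset_mem s).mpr fun A _ => A.2
    obtain ⟨i, hi⟩ := Filter.nonempty_of_mem (f := (D : Filter I)) hB
    exact ⟨f i, Set.mem_iInter₂.2 fun A hA =>
      subset_closure ⟨i, Set.mem_iInter₂.1 hi A hA, rfl⟩⟩
  obtain ⟨x, hx⟩ := aux_fip hX (fun A : (D : Filter I).sets => closure (f '' A))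
    (fun A => isClosed_closure) hcard hfip
  refine ⟨x, Filter.tendsto_def.2 fun U hU => ?_⟩
  obtain ⟨V, hVU, hVopen, hxV⟩ := mem_nhds_iff.1 hU
  have hV : f ⁻¹' V ∈ D := by
    by_contra hc
    have hA : (f ⁻¹' V)ᶜ ∈ D := Ultrafilter.compl_mem_iff_notMem.2 hc
    have hxcl : x ∈ closure (f '' (f ⁻¹' V)ᶜ) := Set.mem_iInter.1 hx ⟨_, hA⟩
    have hsub : closure (f '' (f ⁻¹' V)ᶜ) ⊆ Vᶜ := by
      refine closure_minimal ?_ hVopen.isClosed_compl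
      rintro _ ⟨i, hi, rfl⟩; exact hi
    exact hsub hxcl hxV
  exact Filter.mem_of_superset hV (fun i hi => hVU hi)

theorem product_initiallyCompact (mu lam : Cardinal.{u})
    (hmu : Cardinal.aleph0 ≤ mu) (hlam : Cardinal.aleph0 ≤ lam)
    (h2 : 2 ^ mu ≤ lam)
    {J : Type u} {X : J → Type u} [∀ j, TopologicalSpace (X j)]
    (hX : ∀ j, InitiallyCompact (X j) lam) :
    InitiallyCompact (∀ j, X j) mu := by
  classical
  intro 𝒰 hopen hcover hcard
  by_contra hc
  push_neg at hc
  have hκinf : Infinite mu.out := by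
    rw [Cardinal.infinite_iff, mk_out]; exact hmu
  have hI : Cardinal.mk (Finset mu.out) = mu := by
    rw [mk_finset_of_infinite, mk_out]
  set Z : Finset mu.out → Set (Finset mu.out) := fun t => {s | t ⊆ s} with hZdef
  set F : Filter (Finset mu.out) := ⨅ t, Filter.principal (Z t) with hF
  have hFne : F.NeBot := by
    refine Filter.iInf_neBot_of_directed ?_ ?_
    · intro t₁ t₂
      refine ⟨t₁ ∪ t₂, ?_, ?_⟩ <;>
        exact Filter.principal_mono.2 (fun s hs => by simp only [hZdef, Set.mem_setOf_eq] at hs ⊢; exact le_trans (by simp) hs)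
    · intro t
      exact Filter.principal_neBot_iff.2 ⟨t, subset_refl t⟩
  set D := @Ultrafilter.of _ F hFne with hD
  have hZmem : ∀ t, Z t ∈ D := fun t =>
    Ultrafilter.of_le F (Filter.mem_iInf_of_mem t (Filter.mem_principal_self _))
  obtain ⟨g⟩ : Nonempty (↥𝒰 ↪ mu.out) := by
    rw [← Cardinal.le_def, mk_out]; exact hcard
  have key : ∀ s : Finset mu.out, ∃ x : (∀ j, X j),
      ∀ U (hU : U ∈ 𝒰), g ⟨U, hU⟩ ∈ s → x ∉ U := by
    intro s
    have hfin : {U : Set (∀ j, X j) | ∃ hU : U ∈ 𝒰, g ⟨U, hU⟩ ∈ s}.Finite := by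
      have h1 : ((g ⁻¹' ↑s : Set ↥𝒰)).Finite :=
        (s.finite_toSet).preimage (g.injective.injOn)
      have h2 : {U : Set (∀ j, X j) | ∃ hU : U ∈ 𝒰, g ⟨U, hU⟩ ∈ s}
          = Subtype.val '' (g ⁻¹' ↑s : Set ↥𝒰) := by
        ext U
        simp only [Set.mem_image, Set.mem_preimage, Finset.mem_coe, Set.mem_setOf_eq]
        constructor
        · rintro ⟨hU, hg⟩; exact ⟨⟨U, hU⟩, hg, rfl⟩
        · rintro ⟨⟨V, hV⟩, hg, rfl⟩; exact ⟨hV, hg⟩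
      rw [h2]; exact h1.image _
    set t := hfin.toFinset with ht
    have hts : ↑t ⊆ 𝒰 := by
      intro U hU
      rw [ht, Set.Finite.coe_toFinset] at hU
      exact hU.1
    have hne := hc t hts
    obtain ⟨x, hx⟩ := Set.ne_univ_iff_exists_notMem _ |>.1 hne
    refine ⟨x, fun U hU hgs hxU => hx ?_⟩
    exact ⟨U, by rw [ht]; exact hfin.mem_toFinset.2 ⟨hU, hgs⟩, hxU⟩
  choose f hf using key
  have hcoord : ∀ j, ∃ x : X j, Filter.Tendsto (fun s => f s j) ↑D (nhds x) := by
    intro j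
    exact aux_dcompact (hX j) D (le_of_eq hI) h2 _
  choose x hx using hcoord
  have hxt : Filter.Tendsto f ↑D (nhds x) := tendsto_pi_nhds.2 hx
  have hxmem : x ∈ ⋃₀ 𝒰 := hcover ▸ Set.mem_univ x
  obtain ⟨U₀, hU₀, hxU₀⟩ := hxmem
  have h1 : {s | f s ∈ U₀} ∈ (D : Filter _) :=
    Filter.tendsto_def.1 hxt _ ((hopen U₀ hU₀).mem_nhds hxU₀)
  have h2' : Z {g ⟨U₀, hU₀⟩} ∈ D := hZmem _
  obtain ⟨s, hs1, hs2⟩ := Filter.nonempty_of_mem (f := (D : Filter (Finset mu.out)))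
    (Filter.inter_mem h1 h2')
  exact hf s U₀ hU₀ (hs2 (Finset.mem_singleton_self _)) hs1
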